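/- If ψ_r(λ) = (μ, ν) with μ_i = λ_i − r·ν_i and ν_i = Σ_{j≥i} ⌊(λ_j − λ_{j+1})/r⌋, then the multiset of hook-lengths of bottom squares of λ (squares of leg-length 0) that are divisible by r equals the multiset obtained by multiplying every element of the multiset of hook-lengths of bottom squares of ν by r. -/
import Mathlib


open MvPowerSeries

/-- `f` encodes a partition: weakly decreasing with finitely many nonzero parts.
`f i` is the `(i+1)`-st part `λ_{i+1}`. -/
def PartitionFun (f : ℕ → ℕ) : Prop :=
  (∀ i, f (i + 1) ≤ f i) ∧ ∃ N, ∀ i, N ≤ i → f i = 0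

/-- The size `|λ|` of a partition. -/
noncomputable def psize (f : ℕ → ℕ) : ℕ := ∑ᶠ i, f i

/-- `conj f j` is the number of parts of `f` that are `> j`, i.e. the conjugate part `λ'_{j+1}`. -/
noncomputable def conj (f : ℕ → ℕ) (j : ℕ) : ℕ := {i | j < f i}.ncard

/-- The hook length of the cell in row `i+1`, column `j+1`:
`h = λ_{i+1} + λ'_{j+1} - (i+1) - (j+1) + 1`. -/
noncomputable def hookLen (f : ℕ → ℕ) (i j : ℕ) : ℕ := f i + conj f j - i - j - 1

/-- The cell `(i+1, j+1)` is a bottom square: it lies in the diagram and has leg length 0,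
i.e. `λ'_{j+1} = i + 1`. -/
noncomputable def bottomCell (f : ℕ → ℕ) (i j : ℕ) : Prop := j < f i ∧ conj f j = i + 1

/-- `ν_i = Σ_{j ≥ i} ⌊(λ_j − λ_{j+1})/r⌋` (0-based indexing). -/
noncomputable def nuF (r : ℕ) (f : ℕ → ℕ) : ℕ → ℕ :=
  fun i => ∑ᶠ j, if i ≤ j then (f j - f (j + 1)) / r else 0

/-- `μ_i = λ_i − r·ν_i`. -/
noncomputable def muF (r : ℕ) (f : ℕ → ℕ) : ℕ → ℕ :=
  fun i => f i - r * nuF r f i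

/-- An `r`-kernel: all successive part differences are `< r`. -/
def KernelFun (r : ℕ) (f : ℕ → ℕ) : Prop := ∀ i, f i - f (i + 1) < r

/-- An `r`-core: no hook length is divisible by `r`. -/
noncomputable def RCoreFun (r : ℕ) (f : ℕ → ℕ) : Prop :=
  ∀ i j, j < f i → ¬ r ∣ hookLen f i j

/-- `f` and `g` have the same `r`-core, expressed via the abacus/β-number characterisation:
for some `N` beyond the lengths of both partitions, the multisets of residues mod `r` of the
β-numbers `{λ_i + N − i : 1 ≤ i ≤ N}` of the two partitions coincide. -/
def SameRCore (r : ℕ) (f g : ℕ → ℕ) : Prop :=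
  ∃ N, (∀ i, N ≤ i → f i = 0) ∧ (∀ i, N ≤ i → g i = 0) ∧
    ∀ c, ((Finset.range N).filter fun i => (f i + N - i - 1) % r = c).card =
         ((Finset.range N).filter fun i => (g i + N - i - 1) % r = c).card

/-- `|H_r(λ)|`: the number of cells of `λ` whose hook length is divisible by `r`. -/
noncomputable def hrCard (r : ℕ) (f : ℕ → ℕ) : ℕ :=
  {p : ℕ × ℕ | p.2 < f p.1 ∧ r ∣ hookLen f p.1 p.2}.ncard

/-- `|H^{(b)}_r(λ)|`: the number of bottom squares of `λ` whose hook length is divisible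
by `r`. -/
noncomputable def botHrCard (r : ℕ) (f : ℕ → ℕ) : ℕ :=
  {p : ℕ × ℕ | bottomCell f p.1 p.2 ∧ r ∣ hookLen f p.1 p.2}.ncard

lemma ncard_Iio_nat (m : ℕ) : (Set.Iio m).ncard = m := by
  rw [← Finset.coe_Iio, Set.ncard_coe_finset, Nat.card_Iio]

lemma bottomCell_iff {f : ℕ → ℕ} (hf : PartitionFun f) (i j : ℕ) :
    bottomCell f i j ↔ f (i + 1) ≤ j ∧ j < f i := by
  obtain ⟨hdec, N, hN⟩ := hf
  have hanti : Antitone f := antitone_nat_of_succ_le hdec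
  constructor
  · rintro ⟨hj, hc⟩
    refine ⟨?_, hj⟩
    by_contra hlt
    push_neg at hlt
    have hsub : Set.Iio (i + 2) ⊆ {k | j < f k} := by
      intro k hk
      have hk2 : k ≤ i + 1 := by simpa using Nat.lt_succ_iff.mp hk
      exact lt_of_lt_of_le hlt (hanti hk2)
    have hfin : {k | j < f k}.Finite := by
      apply (Set.finite_Iio N).subset
      intro k hk
      simp only [Set.mem_setOf_eq] at hk
      simp only [Set.mem_Iio]
      by_contra hkN
      push_neg at hkN
      rw [hN k hkN] at hk; omega
    have h1 : (Set.Iio (i + 2)).ncard ≤ {k | j < f k}.ncard :=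
      Set.ncard_le_ncard hsub hfin
    rw [ncard_Iio_nat] at h1
    have : conj f j = {k | j < f k}.ncard := rfl
    omega
  · rintro ⟨h1, h2⟩
    refine ⟨h2, ?_⟩
    have hset : {k | j < f k} = Set.Iio (i + 1) := by
      ext k
      simp only [Set.mem_setOf_eq, Set.mem_Iio]
      constructor
      · intro hk
        by_contra hki
        push_neg at hki
        have : f k ≤ f (i + 1) := hanti hki
        omega
      · intro hk
        have : f i ≤ f k := hanti (by omega)
        omega
    show {k | j < f k}.ncard = i + 1
    rw [hset, ncard_Iio_nat]

lemma hookLen_bottom {f : ℕ → ℕ} {i j : ℕ} (hb : bottomCell f i j) :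
    hookLen f i j = f i - j := by
  obtain ⟨hj, hc⟩ := hb
  unfold hookLen
  rw [hc]
  omega

lemma nuF_eq_sum (r : ℕ) {f : ℕ → ℕ} {N : ℕ} (hN : ∀ i, N ≤ i → f i = 0)
    (i M : ℕ) (hM : N ≤ M) :
    nuF r f i = ∑ j ∈ Finset.range M, if i ≤ j then (f j - f (j + 1)) / r else 0 := by
  apply finsum_eq_sum_of_support_subset
  intro j hj
  simp only [Function.mem_support] at hj
  simp only [Finset.coe_range, Set.mem_Iio]
  by_contra hjM
  push_neg at hjM
  rw [hN j (by omega), hN (j + 1) (by omega)] at hj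
  simp at hj

lemma nuF_succ (r : ℕ) {f : ℕ → ℕ} (hf : PartitionFun f) (i : ℕ) :
    nuF r f i = (f i - f (i + 1)) / r + nuF r f (i + 1) := by
  obtain ⟨hdec, N, hN⟩ := hf
  set M := N + i + 1 with hMdef
  rw [nuF_eq_sum r hN i M (by omega), nuF_eq_sum r hN (i + 1) M (by omega)]
  have hpt : ∀ j ∈ Finset.range M,
      (if i ≤ j then (f j - f (j + 1)) / r else 0) =
      (if j = i then (f i - f (i + 1)) / r else 0) +
        (if i + 1 ≤ j then (f j - f (j + 1)) / r else 0) := by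
    intro j _
    rcases eq_or_ne j i with rfl | hne
    · simp
    · have : (i ≤ j) ↔ (i + 1 ≤ j) := by omega
      simp [hne, this]
  rw [Finset.sum_congr rfl hpt, Finset.sum_add_distrib]
  congr 1
  rw [Finset.sum_ite_eq' (Finset.range M) i, if_pos (Finset.mem_range.2 (by omega))]

lemma nuF_zero (r : ℕ) {f : ℕ → ℕ} {N : ℕ} (hN : ∀ i, N ≤ i → f i = 0)
    (i : ℕ) (hi : N ≤ i) : nuF r f i = 0 := by
  rw [nuF_eq_sum r hN i (N + i + 1) (by omega)]
  apply Finset.sum_eq_zero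
  intro j _
  split_ifs with hij
  · rw [hN j (by omega), hN (j + 1) (by omega)]; simp
  · rfl

lemma nuF_partition (r : ℕ) {f : ℕ → ℕ} (hf : PartitionFun f) :
    PartitionFun (nuF r f) := by
  obtain ⟨N, hN⟩ := hf.2
  exact ⟨fun i => by rw [nuF_succ r hf i]; exact Nat.le_add_left _ _,
    ⟨N, fun i hi => nuF_zero r hN i hi⟩⟩

/-- If `ψ_r(λ) = (μ, ν)`, then the multiset of hook lengths of bottom squares
of `λ` divisible by `r` equals `r` times the multiset of hook lengths of bottom squares of `ν`:
for every `h`, the number of bottom squares of `λ` with hook length `h` divisible by `r` equals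
the number of bottom squares of `ν` whose hook length multiplied by `r` is `h`. -/
theorem stmt2 (r : ℕ) (hr : 0 < r) (f : ℕ → ℕ) (hf : PartitionFun f) (h : ℕ) :
    {p : ℕ × ℕ | bottomCell f p.1 p.2 ∧ hookLen f p.1 p.2 = h ∧ r ∣ h}.ncard =
      {p : ℕ × ℕ | bottomCell (nuF r f) p.1 p.2 ∧
        r * hookLen (nuF r f) p.1 p.2 = h}.ncard := by
  have hnu : PartitionFun (nuF r f) := nuF_partition r hf
  set ν := nuF r f with hν
  have hνsucc : ∀ i, ν i = (f i - f (i + 1)) / r + ν (i + 1) :=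
    fun i => nuF_succ r hf i
  set S₁ := {p : ℕ × ℕ | bottomCell f p.1 p.2 ∧ hookLen f p.1 p.2 = h ∧ r ∣ h} with hS₁
  set S₂ := {p : ℕ × ℕ | bottomCell ν p.1 p.2 ∧ r * hookLen ν p.1 p.2 = h} with hS₂
  set T := {i : ℕ | r ∣ h ∧ 1 ≤ h ∧ h ≤ f i - f (i + 1)} with hT
  have hmem1 : ∀ p : ℕ × ℕ, p ∈ S₁ ↔
      (f (p.1 + 1) ≤ p.2 ∧ p.2 < f p.1 ∧ f p.1 - p.2 = h ∧ r ∣ h) := by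
    intro p
    simp only [hS₁, Set.mem_setOf_eq, bottomCell_iff hf]
    constructor
    · rintro ⟨⟨h1, h2⟩, h3, h4⟩
      rw [hookLen_bottom ((bottomCell_iff hf p.1 p.2).2 ⟨h1, h2⟩)] at h3
      exact ⟨h1, h2, h3, h4⟩
    · rintro ⟨h1, h2, h3, h4⟩
      refine ⟨⟨h1, h2⟩, ?_, h4⟩
      rw [hookLen_bottom ((bottomCell_iff hf p.1 p.2).2 ⟨h1, h2⟩)]
      exact h3
  have hmem2 : ∀ p : ℕ × ℕ, p ∈ S₂ ↔
      (ν (p.1 + 1) ≤ p.2 ∧ p.2 < ν p.1 ∧ r * (ν p.1 - p.2) = h) := by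
    intro p
    simp only [hS₂, Set.mem_setOf_eq, bottomCell_iff hnu]
    constructor
    · rintro ⟨⟨h1, h2⟩, h3⟩
      rw [hookLen_bottom ((bottomCell_iff hnu p.1 p.2).2 ⟨h1, h2⟩)] at h3
      exact ⟨h1, h2, h3⟩
    · rintro ⟨h1, h2, h3⟩
      refine ⟨⟨h1, h2⟩, ?_⟩
      rw [hookLen_bottom ((bottomCell_iff hnu p.1 p.2).2 ⟨h1, h2⟩)]
      exact h3
  have himg1 : Prod.fst '' S₁ = T := by
    ext i
    simp only [Set.mem_image, hT, Set.mem_setOf_eq]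
    constructor
    · rintro ⟨⟨i', j⟩, hp, rfl⟩
      rw [hmem1] at hp
      dsimp only at hp ⊢
      obtain ⟨h1, h2, h3, h4⟩ := hp
      exact ⟨h4, by omega, by omega⟩
    · rintro ⟨h1, h2, h3⟩
      have hle : f (i + 1) ≤ f i := hf.1 i
      refine ⟨(i, f i - h), ?_, rfl⟩
      rw [hmem1]
      dsimp only
      exact ⟨by omega, by omega, by omega, h1⟩
  have himg2 : Prod.fst '' S₂ = T := by
    ext i
    simp only [Set.mem_image, hT, Set.mem_setOf_eq]
    constructor
    · rintro ⟨⟨i', j⟩, hp, rfl⟩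
      rw [hmem2] at hp
      dsimp only at hp ⊢
      obtain ⟨h1, h2, h3⟩ := hp
      set k := ν i' - j with hk
      have hk1 : 1 ≤ k := by omega
      have hkd : k ≤ (f i' - f (i' + 1)) / r := by
        have := hνsucc i'
        omega
      have hrk : r * k ≤ f i' - f (i' + 1) := by
        calc r * k ≤ r * ((f i' - f (i' + 1)) / r) := Nat.mul_le_mul_left r hkd
          _ = (f i' - f (i' + 1)) / r * r := mul_comm _ _
          _ ≤ f i' - f (i' + 1) := Nat.div_mul_le_self _ _
      have hpos : 0 < r * k := Nat.mul_pos hr hk1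
      exact ⟨⟨k, h3.symm⟩, by omega, by omega⟩
    · rintro ⟨⟨k, rfl⟩, h2, h3⟩
      have hk1 : 1 ≤ k := by
        rcases Nat.eq_zero_or_pos k with rfl | hk
        · simp at h2
        · exact hk
      have hkd : k ≤ (f i - f (i + 1)) / r :=
        (Nat.le_div_iff_mul_le hr).2 (by rw [mul_comm]; exact h3)
      have hsucc := hνsucc i
      refine ⟨(i, ν i - k), ?_, rfl⟩
      rw [hmem2]
      dsimp only
      refine ⟨by omega, by omega, ?_⟩
      have hkν : ν i - (ν i - k) = k := by omega
      rw [hkν]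
  have hinj1 : Set.InjOn Prod.fst S₁ := by
    rintro ⟨i, j⟩ hij ⟨i', j'⟩ hij' (heq : i = i')
    subst heq
    rw [hmem1] at hij hij'
    dsimp only at hij hij'
    simp only [Prod.mk.injEq, true_and]
    omega
  have hinj2 : Set.InjOn Prod.fst S₂ := by
    rintro ⟨i, j⟩ hij ⟨i', j'⟩ hij' (heq : i = i')
    subst heq
    rw [hmem2] at hij hij'
    dsimp only at hij hij'
    simp only [Prod.mk.injEq, true_and]
    obtain ⟨a1, a2, a3⟩ := hij
    obtain ⟨b1, b2, b3⟩ := hij'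
    have heq2 : r * (ν i - j) = r * (ν i - j') := a3.trans b3.symm
    have := Nat.eq_of_mul_eq_mul_left hr heq2
    omega
  calc S₁.ncard = (Prod.fst '' S₁).ncard := (Set.ncard_image_of_injOn hinj1).symm
    _ = T.ncard := by rw [himg1]
    _ = (Prod.fst '' S₂).ncard := by rw [himg2]
    _ = S₂.ncard := Set.ncard_image_of_injOn hinj2
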